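/- For every continuously differentiable function f with compact support in the cylinder C = {x ∈ ℝ³ : x₁² + x₂² < 1, |x₃| < 1}, writing |x'| = √(x₁² + x₂²), the weighted inequality ∫_C |f(x)|² / (|x'|² · ln²(e/|x'|)) dx ≤ 4 ∫_C |∇_{x'} f(x)|² dx holds, where ∇_{x'} f = (∂f/∂x₁, ∂f/∂x₂). -/

import Mathlib

open MeasureTheory Real Set

/-- The open unit cylinder `C = {x : x₁² + x₂² < 1, |x₃| < 1}` in `ℝ³`. -/
def cylC : Set (Fin 3 → ℝ) := {x | (x 0)^2 + (x 1)^2 < 1 ∧ |x 2| < 1}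

theorem lintegral_comp_polarCoord_symm' (f : ℝ × ℝ → ENNReal) :
    (∫⁻ p in polarCoord.target, ENNReal.ofReal p.1 * f (polarCoord.symm p)) = ∫⁻ p, f p := by
  set B : ℝ × ℝ → ℝ × ℝ →L[ℝ] ℝ × ℝ := fun p =>
    LinearMap.toContinuousLinearMap (Matrix.toLin (Module.Basis.finTwoProd ℝ) (Module.Basis.finTwoProd ℝ)
      !![Real.cos p.2, -p.1 * Real.sin p.2; Real.sin p.2, p.1 * Real.cos p.2])
  have A : ∀ p ∈ polarCoord.target, HasFDerivWithinAt polarCoord.symm (B p) polarCoord.target p :=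
    fun p _ => (hasFDerivAt_polarCoord_symm p).hasFDerivWithinAt
  have B_det : ∀ p, (B p).det = p.1 := by
    intro p
    conv_rhs => rw [← one_mul p.1, ← cos_sq_add_sin_sq p.2]
    simp only [B, neg_mul, LinearMap.det_toContinuousLinearMap, LinearMap.det_toLin,
      Matrix.det_fin_two_of, sub_neg_eq_add]
    ring
  have hinj : InjOn polarCoord.symm polarCoord.target := polarCoord.symm.injOn
  have himg : polarCoord.symm '' polarCoord.target = polarCoord.source :=
    polarCoord.symm_image_target_eq_source
  calc
    ∫⁻ p in polarCoord.target, ENNReal.ofReal p.1 * f (polarCoord.symm p)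
        = ∫⁻ p in polarCoord.target, ENNReal.ofReal |(B p).det| * f (polarCoord.symm p) := by
          apply setLIntegral_congr_fun polarCoord.open_target.measurableSet
          intro p hp
          dsimp only
          rw [B_det, abs_of_pos hp.1]
    _ = ∫⁻ p in polarCoord.symm '' polarCoord.target, f p :=
          (lintegral_image_eq_lintegral_abs_det_fderiv_mul volume
            polarCoord.open_target.measurableSet A hinj f).symm
    _ = ∫⁻ p in polarCoord.source, f p := by rw [himg]
    _ = ∫⁻ p, f p :=
          (setLIntegral_congr polarCoord_source_ae_eq_univ).trans (by rw [setLIntegral_univ])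

theorem hardy1D (g G : ℝ → ℝ) (hd : ∀ r, HasDerivAt g (G r) r) (hG : Continuous G)
    (h0 : ∀ r, 1 ≤ r → g r = 0) :
    ∫⁻ r in Set.Ioi (0:ℝ), ENNReal.ofReal (g r ^ 2 / (r * (1 - Real.log r) ^ 2))
      ≤ 4 * ∫⁻ r in Set.Ioi (0:ℝ), ENNReal.ofReal (r * G r ^ 2) := by
  have hg : Continuous g := by
    rw [continuous_iff_continuousAt]; exact fun x => (hd x).continuousAt
  set u : ℝ → ℝ := fun r => g r ^ 2 / (r * (1 - Real.log r) ^ 2) with hu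
  set B : ENNReal := ∫⁻ r in Set.Ioi (0:ℝ), ENNReal.ofReal (r * G r ^ 2) with hB
  -- the measurable integrand
  have hu_meas : Measurable u := by
    apply Measurable.div
    · exact (hg.pow 2).measurable
    · exact (measurable_id.mul (((measurable_const.sub measurable_log)).pow_const 2))
  -- key estimate on compact pieces
  have key : ∀ ε : ℝ, 0 < ε → ε ≤ 1 →
      (∫⁻ r in Set.Ioo ε 1, ENNReal.ofReal (u r)) ≤ 4 * B := by
    intro ε hε hε1
    have hIcc : ∀ r ∈ Icc ε 1, (0:ℝ) < r ∧ 1 ≤ 1 - Real.log r := by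
      intro r hr
      have hr0 : 0 < r := lt_of_lt_of_le hε hr.1
      have : Real.log r ≤ 0 := Real.log_nonpos hr0.le hr.2
      exact ⟨hr0, by linarith⟩
    -- continuity of pieces on [ε,1]
    have hw_cont : ContinuousOn (fun r : ℝ => 1 - Real.log r) (Icc ε 1) := by
      apply (continuousOn_const.sub (Real.continuousOn_log.mono ?_))
      intro r hr; exact ne_of_gt (hIcc r hr).1
    have hden_ne : ∀ r ∈ Icc ε 1, r * (1 - Real.log r) ^ 2 ≠ 0 := by
      intro r hr
      obtain ⟨h1, h2⟩ := hIcc r hr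
      have h3 : (0:ℝ) < 1 - Real.log r := by linarith
      positivity
    have hu_cont : ContinuousOn u (Icc ε 1) := by
      apply ContinuousOn.div (hg.pow 2).continuousOn
        (continuousOn_id.mul (hw_cont.pow 2)) hden_ne
    have hrG_cont : ContinuousOn (fun r : ℝ => r * G r ^ 2) (Icc ε 1) :=
      (continuous_id.mul (hG.pow 2)).continuousOn
    have hu_int : IntegrableOn u (Set.Ioo ε 1) :=
      (hu_cont.integrableOn_Icc).mono_set Set.Ioo_subset_Icc_self
    have hrG_int : IntegrableOn (fun r : ℝ => r * G r ^ 2) (Set.Ioo ε 1) :=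
      (hrG_cont.integrableOn_Icc).mono_set Set.Ioo_subset_Icc_self
    set a : ℝ := ∫ r in Set.Ioo ε 1, u r with ha
    set b : ℝ := ∫ r in Set.Ioo ε 1, r * G r ^ 2 with hb
    -- the real inequality a ≤ 4 b via FTC
    have hab : a ≤ 4 * b := by
      set h : ℝ → ℝ := fun r => g r ^ 2 / (1 - Real.log r) with hh
      set P : ℝ → ℝ := fun r => 2 * g r * G r / (1 - Real.log r) + u r with hP
      have hderiv : ∀ r ∈ uIcc ε 1, HasDerivAt h (P r) r := by
        intro r hr
        rw [uIcc_of_le hε1] at hr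
        obtain ⟨hr0, hw1⟩ := hIcc r hr
        have hw0 : (1 : ℝ) - Real.log r ≠ 0 := by linarith
        have h1 : HasDerivAt (fun r : ℝ => g r ^ 2) (2 * g r * G r) r := by
          simpa [mul_comm, mul_assoc, mul_left_comm] using (hd r).fun_pow 2
        have h2 : HasDerivAt (fun r : ℝ => 1 - Real.log r) (-r⁻¹) r := by
          simpa using (hasDerivAt_const r (1:ℝ)).fun_sub (Real.hasDerivAt_log hr0.ne')
        have := h1.fun_div h2 hw0
        refine this.congr_deriv ?_
        rw [hP, hu]
        field_simp
        ring
      have hP_cont : ContinuousOn P (uIcc ε 1) := by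
        rw [uIcc_of_le hε1]
        apply ContinuousOn.add
        · apply ContinuousOn.div
            (((continuous_const.mul hg).mul hG).continuousOn) hw_cont
          intro r hr; have := (hIcc r hr).2; intro hc; rw [hc] at this; linarith
        · exact hu_cont
      have hP_int : IntervalIntegrable P volume ε 1 := hP_cont.intervalIntegrable
      have hftc : ∫ r in ε..1, P r = h 1 - h ε :=
        intervalIntegral.integral_eq_sub_of_hasDerivAt hderiv hP_int
      have hh1 : h 1 = 0 := by simp [hh, h0 1 le_rfl]
      have hhε : 0 ≤ h ε := by
        have := hIcc ε ⟨le_rfl, hε1⟩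
        have : (0:ℝ) < 1 - Real.log ε := by linarith [this.2]
        positivity
      -- split the integral of P
      have hblah : ContinuousOn (fun r => 2 * g r * G r / (1 - Real.log r)) (uIcc ε 1) := by
        rw [uIcc_of_le hε1]
        apply ContinuousOn.div (((continuous_const.mul hg).mul hG).continuousOn) hw_cont
        intro r hr; have := (hIcc r hr).2; intro hc; rw [hc] at this; linarith
      have hu_ii : IntervalIntegrable u volume ε 1 := by
        apply ContinuousOn.intervalIntegrable; rw [uIcc_of_le hε1]; exact hu_cont
      have hq_ii : IntervalIntegrable (fun r => 2 * g r * G r / (1 - Real.log r)) volume ε 1 :=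
        hblah.intervalIntegrable
      have hsplit : ∫ r in ε..1, P r
          = (∫ r in ε..1, 2 * g r * G r / (1 - Real.log r)) + ∫ r in ε..1, u r := by
        rw [hP]; exact intervalIntegral.integral_add hq_ii hu_ii
      -- pointwise AM-GM bound
      have hpt : ∀ r ∈ Icc ε 1, -(2 * g r * G r / (1 - Real.log r)) ≤ u r / 2 + 2 * (r * G r ^ 2) := by
        intro r hr
        obtain ⟨hr0, hw1⟩ := hIcc r hr
        set w : ℝ := 1 - Real.log r
        have hw0 : (0:ℝ) < w := by linarith
        have hid : g r ^ 2 / (r * w ^ 2) / 2 + 2 * (r * G r ^ 2) + 2 * g r * G r / w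
            = (g r + 2 * r * w * G r) ^ 2 / (2 * r * w ^ 2) := by
          field_simp
          ring
        have hnn : 0 ≤ (g r + 2 * r * w * G r) ^ 2 / (2 * r * w ^ 2) := by positivity
        rw [← hid] at hnn
        simp only [hu]
        linarith
      -- assemble
      have h_le : ∫ r in ε..1, u r ≤ ∫ r in ε..1, (u r / 2 + 2 * (r * G r ^ 2)) := by
        have h1 : ∫ r in ε..1, u r = -(∫ r in ε..1, 2 * g r * G r / (1 - Real.log r)) + (h 1 - h ε) := by
          rw [← hftc, hsplit]; ring
        have h2 : ∫ r in ε..1, u r ≤ ∫ r in ε..1, -(2 * g r * G r / (1 - Real.log r)) := by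
          rw [intervalIntegral.integral_neg, h1, hh1]
          linarith
        refine le_trans h2 ?_
        apply intervalIntegral.integral_mono_on hε1 hq_ii.neg
        · have hrG_ii : IntervalIntegrable (fun r : ℝ => r * G r ^ 2) volume ε 1 := by
            apply ContinuousOn.intervalIntegrable; rw [uIcc_of_le hε1]; exact hrG_cont
          exact (hu_ii.div_const 2).add (hrG_ii.const_mul 2)
        · exact hpt
      have hadd : ∫ r in ε..1, (u r / 2 + 2 * (r * G r ^ 2))
          = (∫ r in ε..1, u r) / 2 + 2 * ∫ r in ε..1, (r * G r ^ 2) := by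
        have hrG_ii : IntervalIntegrable (fun r : ℝ => r * G r ^ 2) volume ε 1 := by
          apply ContinuousOn.intervalIntegrable; rw [uIcc_of_le hε1]; exact hrG_cont
        rw [intervalIntegral.integral_add (hu_ii.div_const 2) (hrG_ii.const_mul 2),
          intervalIntegral.integral_div, intervalIntegral.integral_const_mul]
      have hiv : ∫ r in ε..1, u r ≤ 4 * ∫ r in ε..1, (r * G r ^ 2) := by
        rw [hadd] at h_le; linarith
      have e1 : a = ∫ r in ε..1, u r := by
        rw [ha, intervalIntegral.integral_of_le hε1, MeasureTheory.integral_Ioc_eq_integral_Ioo]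
      have e2 : b = ∫ r in ε..1, (r * G r ^ 2) := by
        rw [hb, intervalIntegral.integral_of_le hε1, MeasureTheory.integral_Ioc_eq_integral_Ioo]
      rw [e1, e2]; exact hiv
    -- now pass to lintegrals
    have hnn : ∀ᵐ r ∂(volume.restrict (Set.Ioo ε 1)), 0 ≤ u r := by
      rw [ae_restrict_iff' measurableSet_Ioo]
      filter_upwards with r hr
      have hr0 : (0:ℝ) < r := lt_trans hε hr.1
      rw [hu]; positivity
    have hbnn : ∀ᵐ r ∂(volume.restrict (Set.Ioo ε 1)), 0 ≤ r * G r ^ 2 := by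
      rw [ae_restrict_iff' measurableSet_Ioo]
      filter_upwards with r hr
      have hr0 : (0:ℝ) < r := lt_trans hε hr.1
      positivity
    calc ∫⁻ r in Set.Ioo ε 1, ENNReal.ofReal (u r)
        = ENNReal.ofReal a := (ofReal_integral_eq_lintegral_ofReal hu_int hnn).symm
      _ ≤ ENNReal.ofReal (4 * b) := ENNReal.ofReal_le_ofReal hab
      _ = 4 * ENNReal.ofReal b := by
          rw [ENNReal.ofReal_mul (by norm_num)]; norm_num
      _ = 4 * ∫⁻ r in Set.Ioo ε 1, ENNReal.ofReal (r * G r ^ 2) := by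
          rw [ofReal_integral_eq_lintegral_ofReal hrG_int hbnn]
      _ ≤ 4 * B := by
          gcongr
          exact lintegral_mono_set (fun r hr => lt_trans hε hr.1)
  -- split off [1, ∞) where the integrand vanishes
  have hzero : ∫⁻ r in Set.Ici (1:ℝ), ENNReal.ofReal (u r) = 0 := by
    rw [setLIntegral_congr_fun measurableSet_Ici
      (g := fun _ => (0:ENNReal)) (by intro r hr; simp [hu, h0 r hr])]
    simp
  have hsplit : Set.Ioi (0:ℝ) = Set.Ioo 0 1 ∪ Set.Ici 1 := by
    ext r
    simp only [Set.mem_Ioi, Set.mem_union, Set.mem_Ioo, Set.mem_Ici]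
    constructor
    · intro h; rcases lt_or_ge r 1 with h1 | h1
      · exact Or.inl ⟨h, h1⟩
      · exact Or.inr h1
    · rintro (⟨h1, _⟩ | h1)
      · exact h1
      · linarith
  have hdisj : Disjoint (Set.Ioo (0:ℝ) 1) (Set.Ici 1) := by
    rw [Set.disjoint_left]
    rintro r ⟨_, h1⟩ h2
    exact absurd h2 (not_le.2 h1)
  have hLHS : ∫⁻ r in Set.Ioi (0:ℝ), ENNReal.ofReal (u r)
      = ∫⁻ r in Set.Ioo (0:ℝ) 1, ENNReal.ofReal (u r) := by
    rw [hsplit, lintegral_union measurableSet_Ici hdisj, hzero, add_zero]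
  rw [hLHS]
  -- monotone approximation of Ioo 0 1 by Ioo (1/(n+2)) 1
  set F : ℕ → ℝ → ENNReal :=
    fun n => (Set.Ioo (1/((n:ℝ)+2)) 1).indicator (fun r => ENNReal.ofReal (u r)) with hF
  have hFmeas : ∀ n, Measurable (F n) :=
    fun n => (hu_meas.ennreal_ofReal).indicator measurableSet_Ioo
  have hFmono : Monotone F := by
    intro m n hmn
    apply Set.indicator_le_indicator_of_subset
    · apply Set.Ioo_subset_Ioo_left
      apply one_div_le_one_div_of_le (by positivity)
      have : (m:ℝ) ≤ n := Nat.cast_le.2 hmn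
      linarith
    · intro r; exact zero_le
  have hFsup : ∀ r, (⨆ n, F n r)
      = (Set.Ioo (0:ℝ) 1).indicator (fun r => ENNReal.ofReal (u r)) r := by
    intro r
    by_cases hr : r ∈ Set.Ioo (0:ℝ) 1
    · rw [Set.indicator_of_mem hr]
      apply le_antisymm
      · refine iSup_le fun n => ?_
        by_cases h : r ∈ Set.Ioo (1/((n:ℝ)+2)) 1
        · simp only [hF]; rw [Set.indicator_of_mem h]
        · simp only [hF]; rw [Set.indicator_of_notMem h]; exact zero_le
      · obtain ⟨n, hn⟩ := exists_nat_gt (1/r)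
        have hn' : 1/((n:ℝ)+2) < r := by
          rw [div_lt_iff₀ (by positivity)]
          rw [div_lt_iff₀ hr.1] at hn
          nlinarith [hr.1]
        refine le_iSup_of_le n ?_
        simp only [hF]; rw [Set.indicator_of_mem (Set.mem_Ioo.mpr ⟨hn', hr.2⟩)]
    · rw [Set.indicator_of_notMem hr]
      refine le_antisymm (iSup_le fun n => ?_) (zero_le)
      simp only [hF]; rw [Set.indicator_of_notMem]
      intro hmem
      obtain ⟨hm1, hm2⟩ := Set.mem_Ioo.mp hmem
      exact hr (Set.mem_Ioo.mpr ⟨lt_trans (by positivity) hm1, hm2⟩)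
  calc ∫⁻ r in Set.Ioo (0:ℝ) 1, ENNReal.ofReal (u r)
      = ∫⁻ r, (Set.Ioo (0:ℝ) 1).indicator (fun r => ENNReal.ofReal (u r)) r := by
        rw [lintegral_indicator measurableSet_Ioo]
    _ = ∫⁻ r, ⨆ n, F n r := by
        apply lintegral_congr; intro r; rw [hFsup]
    _ = ⨆ n, ∫⁻ r, F n r := lintegral_iSup hFmeas hFmono
    _ ≤ 4 * B := by
        refine iSup_le fun n => ?_
        simp only [hF]; rw [lintegral_indicator measurableSet_Ioo]
        apply key
        · positivity
        · rw [div_le_one (by positivity)]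
          have : (0:ℝ) ≤ n := Nat.cast_nonneg n
          linarith

noncomputable def e3 : (Fin 3 → ℝ) ≃ᵐ ℝ × ℝ × ℝ :=
  (MeasurableEquiv.piFinSuccAbove (fun _ : Fin 3 => ℝ) 2).trans
    ((MeasurableEquiv.refl ℝ).prodCongr MeasurableEquiv.finTwoArrow)

lemma e3_mp : MeasurePreserving (⇑e3) volume volume := by
  have h : ⇑e3 = (⇑((MeasurableEquiv.refl ℝ).prodCongr MeasurableEquiv.finTwoArrow)) ∘
      (⇑(MeasurableEquiv.piFinSuccAbove (fun _ : Fin 3 => ℝ) 2)) := rfl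
  rw [h]
  refine MeasurePreserving.comp ?_ (volume_preserving_piFinSuccAbove (fun _ : Fin 3 => ℝ) 2)
  exact (MeasurePreserving.id volume).prod (volume_preserving_finTwoArrow ℝ)

lemma e3_symm_apply (p : ℝ × ℝ × ℝ) : e3.symm p = ![p.2.1, p.2.2, p.1] := by
  funext j
  have h : e3.symm p = (MeasurableEquiv.piFinSuccAbove (fun _ : Fin 3 => ℝ) 2).symm
      (p.1, MeasurableEquiv.finTwoArrow.symm p.2) := rfl
  rw [h]
  simp only [MeasurableEquiv.piFinSuccAbove_symm_apply, MeasurableEquiv.finTwoArrow_symm_apply]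
  fin_cases j <;> rfl

lemma aux_div (r A w : ℝ) (hr : r ≠ 0) : r * (A / (r ^ 2 * w)) = A / (r * w) := by
  rcases eq_or_ne w 0 with rfl | hw
  · simp
  · field_simp

/-- Leray/Hardy type inequality with logarithmic weight on the unit cylinder:
for `f ∈ C¹₀(C)`,
`∫_C |f|²/(|x'|² ln²(e/|x'|)) dx ≤ 4 ∫_C |∇_{x'} f|² dx`. -/
theorem stmt0 (f : (Fin 3 → ℝ) → ℝ)
    (hf : ContDiff ℝ 1 f) (hsupp : HasCompactSupport f)
    (hsub : tsupport f ⊆ cylC) :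
    (∫ x in cylC, (f x)^2 /
        (((x 0)^2 + (x 1)^2) *
          (Real.log (Real.exp 1 / Real.sqrt ((x 0)^2 + (x 1)^2)))^2))
      ≤ 4 * ∫ x in cylC,
          ((fderiv ℝ f x (Pi.single 0 1))^2 + (fderiv ℝ f x (Pi.single 1 1))^2) := by
  classical
  set W : (Fin 3 → ℝ) → ℝ := fun x => (f x)^2 /
      (((x 0)^2 + (x 1)^2) *
        (Real.log (Real.exp 1 / Real.sqrt ((x 0)^2 + (x 1)^2)))^2) with hW
  set D : (Fin 3 → ℝ) → ℝ := fun x =>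
      (fderiv ℝ f x (Pi.single 0 1))^2 + (fderiv ℝ f x (Pi.single 1 1))^2 with hD
  have hf_cont : Continuous f := hf.continuous
  have hfd_cont : Continuous (fderiv ℝ f) := hf.continuous_fderiv one_ne_zero
  have hD_cont : Continuous D := by
    apply Continuous.add
    · exact (hfd_cont.clm_apply continuous_const).pow 2
    · exact (hfd_cont.clm_apply continuous_const).pow 2
  have hD_meas : Measurable D := hD_cont.measurable
  have hD_nonneg : ∀ x, 0 ≤ D x := fun x => by rw [hD]; positivity
  have hD_supp : HasCompactSupport D := by
    apply HasCompactSupport.intro hsupp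
    intro x hx
    have hz : fderiv ℝ f x = 0 := by
      by_contra h
      exact hx (support_fderiv_subset ℝ (Function.mem_support.mpr h))
    simp [hD, hz]
  have hD_int : Integrable D := hD_cont.integrable_of_hasCompactSupport hD_supp
  have hq_cont : Continuous (fun x : Fin 3 → ℝ => (x 0)^2 + (x 1)^2) :=
    ((continuous_apply 0).pow 2).add ((continuous_apply 1).pow 2)
  have hW_meas : Measurable W := by
    rw [hW]
    apply Measurable.div ((hf_cont.pow 2).measurable)
    apply Measurable.mul hq_cont.measurable
    exact (Real.measurable_log.comp
      (measurable_const.div (Real.continuous_sqrt.comp hq_cont).measurable)).pow_const 2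
  have hW_nonneg : ∀ x, 0 ≤ W x := fun x => by
    rw [hW]
    apply div_nonneg (sq_nonneg _)
    positivity
  -- reduction of the two sides
  have hD0 : ∀ x ∉ cylC, D x = 0 := by
    intro x hx
    have hz : fderiv ℝ f x = 0 := by
      by_contra h
      exact hx (hsub (support_fderiv_subset ℝ (Function.mem_support.mpr h)))
    simp [hD, hz]
  set R : ENNReal := ∫⁻ x, ENNReal.ofReal (D x) with hR
  have hR_eq : R = ENNReal.ofReal (∫ x, D x) :=
    (ofReal_integral_eq_lintegral_ofReal hD_int
      (Filter.Eventually.of_forall hD_nonneg)).symm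
  have hR_ne : R ≠ ⊤ := by rw [hR_eq]; exact ENNReal.ofReal_ne_top
  -- iterated-integral representation
  have step1 : ∀ (F : (Fin 3 → ℝ) → ℝ), Measurable F →
      ∫⁻ x, ENNReal.ofReal (F x)
        = ∫⁻ t : ℝ, ∫⁻ y : ℝ × ℝ, ENNReal.ofReal (F ![y.1, y.2, t]) := by
    intro F hF
    have h0 : ∫⁻ x, ENNReal.ofReal (F x)
        = ∫⁻ p : ℝ × ℝ × ℝ, ENNReal.ofReal (F (e3.symm p)) :=
      ((e3_mp.symm e3).lintegral_comp hF.ennreal_ofReal).symm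
    rw [h0, Measure.volume_eq_prod, lintegral_prod]
    · apply lintegral_congr; intro t
      apply lintegral_congr; intro y
      rw [e3_symm_apply]
    · exact ((hF.comp e3.symm.measurable).ennreal_ofReal).aemeasurable
  have step2 : ∀ (F : (Fin 3 → ℝ) → ℝ), Measurable F → ∀ t : ℝ,
      ∫⁻ y : ℝ × ℝ, ENNReal.ofReal (F ![y.1, y.2, t])
        = ∫⁻ θ in Set.Ioo (-π) π, ∫⁻ r in Set.Ioi (0:ℝ),
            ENNReal.ofReal r * ENNReal.ofReal (F ![r * Real.cos θ, r * Real.sin θ, t]) := by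
    intro F hF t
    rw [← lintegral_comp_polarCoord_symm' (fun y => ENNReal.ofReal (F ![y.1, y.2, t]))]
    rw [polarCoord_target, Measure.volume_eq_prod, ← Measure.prod_restrict, lintegral_prod_symm]
    · apply lintegral_congr; intro θ
      apply lintegral_congr; intro r
      simp only [polarCoord_symm_apply]
    · apply AEMeasurable.fun_mul
      · exact (measurable_fst.ennreal_ofReal).aemeasurable
      · refine Measurable.aemeasurable ?_
        apply Measurable.ennreal_ofReal
        apply hF.comp
        apply measurable_pi_iff.mpr
        intro j
        fin_cases j
        · exact ((continuous_fst.mul (Real.continuous_cos.comp continuous_snd))).measurable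
        · exact ((continuous_fst.mul (Real.continuous_sin.comp continuous_snd))).measurable
        · exact measurable_const
  -- the fiberwise Hardy inequality
  have fiber : ∀ t θ : ℝ,
      (∫⁻ r in Set.Ioi (0:ℝ),
          ENNReal.ofReal r * ENNReal.ofReal (W ![r * Real.cos θ, r * Real.sin θ, t]))
        ≤ 4 * ∫⁻ r in Set.Ioi (0:ℝ),
            ENNReal.ofReal r * ENNReal.ofReal (D ![r * Real.cos θ, r * Real.sin θ, t]) := by
    intro t θ
    set c : ℝ → (Fin 3 → ℝ) := fun r => ![r * Real.cos θ, r * Real.sin θ, t] with hc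
    set v : Fin 3 → ℝ := ![Real.cos θ, Real.sin θ, 0] with hv
    have hc_deriv : ∀ r, HasDerivAt c v r := by
      intro r
      rw [hasDerivAt_pi]
      intro i
      fin_cases i
      · simpa [hc, hv] using (hasDerivAt_id r).mul_const (Real.cos θ)
      · simpa [hc, hv] using (hasDerivAt_id r).mul_const (Real.sin θ)
      · simpa [hc, hv] using hasDerivAt_const r t
    have hc_cont : Continuous c := by
      apply continuous_pi
      intro i
      fin_cases i
      · simpa [hc] using continuous_id.fun_mul continuous_const
      · simpa [hc] using continuous_id.fun_mul continuous_const
      · simpa [hc] using continuous_const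
    set g : ℝ → ℝ := fun r => f (c r) with hg
    set G : ℝ → ℝ := fun r => (fderiv ℝ f (c r)) v with hG
    have hfd : ∀ r, HasDerivAt g (G r) r := fun r =>
      ((hf.differentiable one_ne_zero) (c r)).hasFDerivAt.comp_hasDerivAt r (hc_deriv r)
    have hG_cont : Continuous G := (hfd_cont.comp hc_cont).clm_apply continuous_const
    have hg0 : ∀ r, 1 ≤ r → g r = 0 := by
      intro r hr
      show f (c r) = 0
      apply image_eq_zero_of_notMem_tsupport
      intro hmem
      have hmem' := hsub hmem
      simp only [cylC, hc, Set.mem_setOf_eq, Matrix.cons_val_zero, Matrix.cons_val_one,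
        Matrix.head_cons] at hmem'
      have h2 : (r * Real.cos θ)^2 + (r * Real.sin θ)^2 = r^2 := by
        linear_combination r^2 * (Real.sin_sq_add_cos_sq θ)
      have h3 : (1:ℝ) ≤ r^2 := by nlinarith
      linarith [hmem'.1, h2.symm.trans_lt hmem'.1]
    -- rewrite the left integrand
    have hLrw : ∫⁻ r in Set.Ioi (0:ℝ),
        ENNReal.ofReal r * ENNReal.ofReal (W ![r * Real.cos θ, r * Real.sin θ, t])
        = ∫⁻ r in Set.Ioi (0:ℝ),
            ENNReal.ofReal (g r ^ 2 / (r * (1 - Real.log r) ^ 2)) := by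
      apply setLIntegral_congr_fun measurableSet_Ioi
      intro r hr
      have hr0 : (0:ℝ) < r := hr
      have hq : (r * Real.cos θ)^2 + (r * Real.sin θ)^2 = r^2 := by
        linear_combination r^2 * (Real.sin_sq_add_cos_sq θ)
      have hWc : W ![r * Real.cos θ, r * Real.sin θ, t]
          = g r ^ 2 / (r ^ 2 * (1 - Real.log r) ^ 2) := by
        rw [hW]
        simp only [Matrix.cons_val_zero, Matrix.cons_val_one, Matrix.head_cons]
        rw [hq, Real.sqrt_sq hr0.le, Real.log_div (Real.exp_ne_zero 1) hr0.ne', Real.log_exp]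
      dsimp only
      rw [hWc, ← ENNReal.ofReal_mul hr0.le, aux_div _ _ _ hr0.ne']
    rw [hLrw]
    have hmain := hardy1D g G hfd hG_cont hg0
    refine le_trans hmain ?_
    refine mul_le_mul_right (lintegral_mono fun r => ?_) 4
    rcases le_or_gt r 0 with hr0 | hr0
    · have hz : r * G r ^ 2 ≤ 0 := mul_nonpos_of_nonpos_of_nonneg hr0 (sq_nonneg _)
      rw [ENNReal.ofReal_eq_zero.mpr hz]
      exact zero_le
    rw [← ENNReal.ofReal_mul hr0.le]
    apply ENNReal.ofReal_le_ofReal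
    apply mul_le_mul_of_nonneg_left _ hr0.le
    -- G r ^ 2 ≤ D (c r)
    have hv_eq : v = Real.cos θ • (Pi.single 0 1 : Fin 3 → ℝ)
        + Real.sin θ • (Pi.single 1 1 : Fin 3 → ℝ) := by
      funext j
      fin_cases j <;> simp [hv]
    have hGr : G r = Real.cos θ * (fderiv ℝ f (c r) (Pi.single 0 1))
        + Real.sin θ * (fderiv ℝ f (c r) (Pi.single 1 1)) := by
      rw [hG, hv_eq]
      simp [ContinuousLinearMap.map_add, ContinuousLinearMap.map_smul, smul_eq_mul]
    rw [hGr]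
    simp only [hD]
    nlinarith [Real.sin_sq_add_cos_sq θ,
      sq_nonneg (Real.sin θ * (fderiv ℝ f (c r) (Pi.single 0 1))
        - Real.cos θ * (fderiv ℝ f (c r) (Pi.single 1 1)))]
  -- assemble the key lintegral inequality
  have four_ne : (4 : ENNReal) ≠ ⊤ := by norm_num
  have KEY : ∫⁻ x, ENNReal.ofReal (W x) ≤ 4 * R := by
    rw [step1 W hW_meas, hR, step1 D hD_meas]
    calc ∫⁻ t : ℝ, ∫⁻ y : ℝ × ℝ, ENNReal.ofReal (W ![y.1, y.2, t])
        = ∫⁻ t : ℝ, ∫⁻ θ in Set.Ioo (-π) π, ∫⁻ r in Set.Ioi (0:ℝ),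
            ENNReal.ofReal r * ENNReal.ofReal (W ![r * Real.cos θ, r * Real.sin θ, t]) :=
          lintegral_congr fun t => step2 W hW_meas t
      _ ≤ ∫⁻ t : ℝ, ∫⁻ θ in Set.Ioo (-π) π, 4 * ∫⁻ r in Set.Ioi (0:ℝ),
            ENNReal.ofReal r * ENNReal.ofReal (D ![r * Real.cos θ, r * Real.sin θ, t]) :=
          lintegral_mono fun t => lintegral_mono fun θ => fiber t θ
      _ = ∫⁻ t : ℝ, 4 * ∫⁻ θ in Set.Ioo (-π) π, ∫⁻ r in Set.Ioi (0:ℝ),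
            ENNReal.ofReal r * ENNReal.ofReal (D ![r * Real.cos θ, r * Real.sin θ, t]) :=
          lintegral_congr fun t => lintegral_const_mul' 4 _ four_ne
      _ = 4 * ∫⁻ t : ℝ, ∫⁻ θ in Set.Ioo (-π) π, ∫⁻ r in Set.Ioi (0:ℝ),
            ENNReal.ofReal r * ENNReal.ofReal (D ![r * Real.cos θ, r * Real.sin θ, t]) :=
          lintegral_const_mul' 4 _ four_ne
      _ = 4 * ∫⁻ t : ℝ, ∫⁻ y : ℝ × ℝ, ENNReal.ofReal (D ![y.1, y.2, t]) := by
          rw [lintegral_congr fun t => (step2 D hD_meas t).symm]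
  -- conclude
  rw [setIntegral_eq_integral_of_forall_compl_eq_zero hD0]
  have hL_eq : (∫ x in cylC, W x) = (∫⁻ x in cylC, ENNReal.ofReal (W x)).toReal :=
    integral_eq_lintegral_of_nonneg_ae (Filter.Eventually.of_forall hW_nonneg)
      hW_meas.aestronglyMeasurable
  rw [hL_eq]
  have h1 : (∫⁻ x in cylC, ENNReal.ofReal (W x)) ≤ 4 * R :=
    le_trans (lintegral_mono' Measure.restrict_le_self le_rfl) KEY
  calc (∫⁻ x in cylC, ENNReal.ofReal (W x)).toReal
      ≤ ((4 : ENNReal) * R).toReal :=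
        ENNReal.toReal_mono (ENNReal.mul_ne_top four_ne hR_ne) h1
    _ = 4 * ∫ x, D x := by
        rw [hR_eq, ENNReal.toReal_mul, ENNReal.toReal_ofReal (integral_nonneg hD_nonneg)]
        norm_num
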